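/- For unit vectors φ_1,...,φ_n (n ≥ 2) in a real inner product space, max_{j≠j'} ⟨φ_j, φ_{j'}⟩ = -1/(n-1) holds if and only if ⟨φ_j, φ_{j'}⟩ = -1/(n-1) for all j ≠ j' (i.e., the vectors form a regular simplex). -/

import Mathlib

/-- Equality in Rankin's simplex bound holds iff the vectors form a regular
simplex: `max_{j≠j'} ⟨φ_j, φ_{j'}⟩ = -1/(n-1)` iff all pairwise inner products
equal `-1/(n-1)`. -/
theorem rankin_simplex_equality {H : Type*} [NormedAddCommGroup H] [InnerProductSpace ℝ H]
    {n : ℕ} (hn : 2 ≤ n) (φ : Fin n → H) (hunit : ∀ j, ‖φ j‖ = 1)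
    (hne : (Finset.univ.filter (fun p : Fin n × Fin n => p.1 ≠ p.2)).Nonempty) :
    (Finset.univ.filter (fun p : Fin n × Fin n => p.1 ≠ p.2)).sup' hne
        (fun p => (inner ℝ (φ p.1) (φ p.2) : ℝ)) = -(1 / ((n : ℝ) - 1))
      ↔ ∀ j j', j ≠ j' → (inner ℝ (φ j) (φ j') : ℝ) = -(1 / ((n : ℝ) - 1)) := by
  set S := Finset.univ.filter (fun p : Fin n × Fin n => p.1 ≠ p.2) with hS
  set M : ℝ := -(1 / ((n : ℝ) - 1)) with hMdef
  have hn1 : (1 : ℝ) ≤ (n : ℝ) - 1 := by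
    have : (2 : ℝ) ≤ (n : ℝ) := by exact_mod_cast hn
    linarith
  have hn0 : ((n : ℝ) - 1) ≠ 0 := by linarith
  constructor
  · intro hsup j j' hjj'
    have hmem : ∀ p ∈ S, (inner ℝ (φ p.1) (φ p.2) : ℝ) ≤ M := by
      intro p hp
      calc (inner ℝ (φ p.1) (φ p.2) : ℝ) ≤ S.sup' hne (fun p => (inner ℝ (φ p.1) (φ p.2) : ℝ)) :=
        Finset.le_sup' (fun p : Fin n × Fin n => (inner ℝ (φ p.1) (φ p.2) : ℝ)) hp
      _ = M := hsup
    -- sum over off-diagonal pairs is at least -n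
    have hexp : ‖∑ k, φ k‖ ^ 2 = (n : ℝ) + ∑ p ∈ S, (inner ℝ (φ p.1) (φ p.2) : ℝ) := by
      rw [← real_inner_self_eq_norm_sq, sum_inner]
      simp_rw [inner_sum]
      have hsplit := Finset.sum_filter_add_sum_filter_not (Finset.univ : Finset (Fin n × Fin n))
        (fun p => p.1 = p.2) (fun p => (inner ℝ (φ p.1) (φ p.2) : ℝ))
      have hdiag : ∑ p ∈ Finset.univ.filter (fun p : Fin n × Fin n => p.1 = p.2),
          (inner ℝ (φ p.1) (φ p.2) : ℝ) = (n : ℝ) := by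
        rw [Finset.sum_filter, Fintype.sum_prod_type]
        have : ∀ j : Fin n, (∑ k : Fin n, if j = k then (inner ℝ (φ j) (φ k) : ℝ) else 0)
            = 1 := by
          intro j
          rw [Finset.sum_ite_eq]
          simp [real_inner_self_eq_norm_sq, hunit j]
        simp [this]
      have htot : ∑ j : Fin n, ∑ k : Fin n, (inner ℝ (φ j) (φ k) : ℝ)
          = ∑ p : Fin n × Fin n, (inner ℝ (φ p.1) (φ p.2) : ℝ) := by
        rw [Fintype.sum_prod_type]
      rw [htot, ← hsplit, hdiag]
    have hsumge : -(n : ℝ) ≤ ∑ p ∈ S, (inner ℝ (φ p.1) (φ p.2) : ℝ) := by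
      have := sq_nonneg ‖∑ k, φ k‖
      rw [hexp] at this
      linarith
    have hcard : (S.card : ℝ) = (n : ℝ) * ((n : ℝ) - 1) := by
      have h1 : (Finset.univ.filter (fun p : Fin n × Fin n => p.1 = p.2)).card = n := by
        rw [Finset.card_filter, Fintype.sum_prod_type]
        simp
      have h2 := Finset.card_filter_add_card_filter_not
        (s := (Finset.univ : Finset (Fin n × Fin n))) (p := fun p => p.1 = p.2)
      have h3 : (Finset.univ : Finset (Fin n × Fin n)).card = n * n := by
        simp
      have h4 : S.card = n * n - n := by
        rw [hS]
        simp only [ne_eq]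
        omega
      rw [h4]
      have hnn : n ≤ n * n := Nat.le_mul_of_pos_left n (by omega)
      push_cast [h4, Nat.cast_sub hnn]
      ring
    by_contra hcon
    have hlt : (inner ℝ (φ j) (φ j') : ℝ) < M :=
      lt_of_le_of_ne (hmem (j, j') (by simp [hS, hjj'])) hcon
    have hstrict : ∑ p ∈ S, (inner ℝ (φ p.1) (φ p.2) : ℝ) < ∑ p ∈ S, M := by
      apply Finset.sum_lt_sum hmem
      exact ⟨(j, j'), by simp [hS, hjj'], hlt⟩
    rw [Finset.sum_const, nsmul_eq_mul] at hstrict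
    have hval : (S.card : ℝ) * M = -(n : ℝ) := by
      rw [hcard, hMdef]
      field_simp
    rw [hval] at hstrict
    linarith
  · intro h
    have : S.sup' hne (fun p => (inner ℝ (φ p.1) (φ p.2) : ℝ)) = S.sup' hne (fun _ => M) := by
      apply Finset.sup'_congr hne rfl
      intro p hp
      have hp' : p.1 ≠ p.2 := by
        simpa [hS] using hp
      exact h p.1 p.2 hp'
    rw [this, Finset.sup'_const]
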